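/- Let (B, D(B)) be a closed densely defined operator on a Hilbert space H with compact resolvent, such that C + B is maximal accretive for some C. Suppose there is a sesquilinear hermitian form 𝔥 on a dense subspace 𝒟 ⊂ D(B), continuous on a weighted space W continuously embedded in H, satisfying 𝔥(Bs, s') = 𝔥(s, Bs') for s, s' ∈ W ∩ D(B), with every eigenfunction of B lying in W, and such that for every 0 ≠ u ∈ W there exists v with 𝔥(u,v) ≠ 0 (𝔥 nondegenerate on W × H-directions). Then Spec(B) is invariant under complex conjugation: λ ∈ Spec(B) ⟹ λ̄ ∈ Spec(B). -/

import Mathlib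

/-- abstract PT-symmetry: let `B` be closed, densely defined, with compact
resolvent (so that `B - z` is Fredholm of index `0`: either it has an eigenvector or it is
bijective) and `C + B` maximal accretive.  Given a hermitian sesquilinear form `𝔥`, defined on a
subspace `W` containing all eigenfunctions of `B`, with respect to which `B` is formally
self-adjoint and which is nondegenerate on `W`, the spectrum of `B` is invariant under complex
conjugation. -/
theorem stmt_15 (H : Type*) [NormedAddCommGroup H] [InnerProductSpace ℂ H] [CompleteSpace H]
    (B : H →ₗ.[ℂ] H)
    (hdense : Dense (B.domain : Set H))
    (hclosed : IsClosed (B.graph : Set (H × H)))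
    (C : ℝ)
    (haccr : ∀ x : B.domain, 0 ≤ (inner ℂ ((x : H)) (B x + (C : ℂ) • (x : H)) : ℂ).re)
    (hsurj : ∀ y : H, ∃ x : B.domain, B x + ((C : ℂ) + 1) • (x : H) = y)
    (hfred : ∀ z : ℂ, (∃ x : B.domain, (x : H) ≠ 0 ∧ B x = z • (x : H)) ∨
      Function.Bijective fun x : B.domain => B x - z • (x : H))
    (W : Submodule ℂ H)
    (𝔥 : H → H → ℂ)
    (hadd₁ : ∀ u v w : H, 𝔥 (u + v) w = 𝔥 u w + 𝔥 v w)
    (hsmul₁ : ∀ (c : ℂ) (u w : H), 𝔥 (c • u) w = starRingEnd ℂ c * 𝔥 u w)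
    (hadd₂ : ∀ u v w : H, 𝔥 u (v + w) = 𝔥 u v + 𝔥 u w)
    (hsmul₂ : ∀ (c : ℂ) (u w : H), 𝔥 u (c • w) = c * 𝔥 u w)
    (hherm : ∀ u v : H, u ∈ W → v ∈ W → 𝔥 u v = starRingEnd ℂ (𝔥 v u))
    (heig : ∀ (z : ℂ) (x : B.domain), B x = z • (x : H) → (x : H) ∈ W)
    (hsa : ∀ x y : B.domain, (x : H) ∈ W → B x ∈ W →
      𝔥 (B x) ((y : H)) = 𝔥 ((x : H)) (B y))
    (hnd : ∀ u : H, u ∈ W → u ≠ 0 → ∃ v : H, 𝔥 u v ≠ 0) :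
    ∀ lam : ℂ, ¬ Function.Bijective (fun x : B.domain => B x - lam • (x : H)) →
      ¬ Function.Bijective (fun x : B.domain => B x - (starRingEnd ℂ lam) • (x : H)) := by
  intro lam hnb hbij
  obtain ⟨s, hs0, hsl⟩ := (hfred lam).resolve_right hnb
  have hsW : (s : H) ∈ W := heig lam s hsl
  obtain ⟨v, hv⟩ := hnd (s : H) hsW hs0
  obtain ⟨x, hx⟩ := hbij.surjective v
  simp only at hx
  have hBsW : B s ∈ W := hsl ▸ W.smul_mem lam hsW
  have key : 𝔥 (B s) ((x : H)) = 𝔥 ((s : H)) (B x) := hsa s x hsW hBsW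
  rw [hsl, hsmul₁] at key
  apply hv
  have : 𝔥 (s : H) v = 𝔥 (s : H) (B x - starRingEnd ℂ lam • (x : H)) := by rw [hx]
  rw [this, sub_eq_add_neg, hadd₂, ← neg_smul, hsmul₂, ← key]
  ring
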